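/- Let T : ℝ → ℝ be twice differentiable and satisfy the Emden–Fowler equation T''(J) + d·J^n·T(J)^m = 0 on an interval where T(J) > 0, with n + m = -3 and m ≠ -1. Then the function I(J) = (1/2)(T'(J)·J − T(J))² + d·J^(n+2)·T(J)^(m+1)/(m+1) is constant on that interval. -/

import Mathlib

/-- Noetherian first integral of the Emden–Fowler equation
`T'' + d J^n T^m = 0` with `n + m = -3`, `m ≠ -1`:
`I(J) = (1/2)(T' J - T)^2 + d J^(n+2) T^(m+1)/(m+1)` is constant on an open
interval where `J > 0` and `T J > 0`. -/
theorem emden_fowler_first_integral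
    (T : ℝ → ℝ) (d n m a b : ℝ)
    (hT : ContDiff ℝ 2 T)
    (hnm : n + m = -3) (hm : m ≠ -1)
    (hpos : ∀ J ∈ Set.Ioo a b, 0 < J ∧ 0 < T J)
    (hode : ∀ J ∈ Set.Ioo a b,
      deriv (deriv T) J + d * J ^ n * (T J) ^ m = 0) :
    ∀ J₁ ∈ Set.Ioo a b, ∀ J₂ ∈ Set.Ioo a b,
      (1/2) * (deriv T J₁ * J₁ - T J₁) ^ 2
          + d * J₁ ^ (n + 2) * (T J₁) ^ (m + 1) / (m + 1)
        = (1/2) * (deriv T J₂ * J₂ - T J₂) ^ 2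
          + d * J₂ ^ (n + 2) * (T J₂) ^ (m + 1) / (m + 1) := by
  have hm1 : m + 1 ≠ 0 := fun h => hm (by linarith)
  have hT1 : Differentiable ℝ T := hT.differentiable (by norm_num)
  have hT2 : ContDiff ℝ 1 (deriv T) := by
    have h : ContDiff ℝ ((1:ℕ∞)+1) T := by
      convert hT using 2
      norm_num
    exact (contDiff_succ_iff_deriv.mp h).2.2
  have hT2' : Differentiable ℝ (deriv T) := hT2.differentiable (by norm_num)
  set I : ℝ → ℝ := fun J => (1/2) * (deriv T J * J - T J) ^ 2
      + d * J ^ (n + 2) * (T J) ^ (m + 1) / (m + 1) with hI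
  have key : ∀ x ∈ Set.Ioo a b, HasDerivAt I 0 x := by
    intro x hx
    obtain ⟨hxpos, htpos⟩ := hpos x hx
    have h1 : HasDerivAt T (deriv T x) x := (hT1 x).hasDerivAt
    have h2 : HasDerivAt (deriv T) (deriv (deriv T) x) x := (hT2' x).hasDerivAt
    have hJ : HasDerivAt (fun y : ℝ => y ^ (n+2)) ((n+2) * x ^ (n+2-1)) x :=
      Real.hasDerivAt_rpow_const (Or.inl hxpos.ne')
    have hTm : HasDerivAt (fun y => T y ^ (m+1))
        (deriv T x * (m+1) * T x ^ (m+1-1)) x :=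
      h1.rpow_const (Or.inl htpos.ne')
    have hA : HasDerivAt (fun y => deriv T y * y - T y)
        (deriv (deriv T) x * x + deriv T x * 1 - deriv T x) x :=
      (h2.mul (hasDerivAt_id x)).sub h1
    have hA2 := ((hA.pow 2).const_mul (1/2 : ℝ))
    have hB := (((hJ.const_mul d).mul hTm).div_const (m+1))
    have hsum := hA2.add hB
    convert hsum using 1
    · rfl
    · rfl
    · rfl
    have hD2 : deriv (deriv T) x = -(d * x ^ n * T x ^ m) := by
      have := hode x hx; linarith
    have e1 : x ^ (n+2-1) = x ^ n * x := by
      rw [show n + 2 - 1 = n + 1 by ring, Real.rpow_add hxpos, Real.rpow_one]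
    have e2 : x ^ (n+2) = x ^ n * x * x := by
      rw [Real.rpow_add hxpos, show (2:ℝ) = 1 + 1 by norm_num,
        Real.rpow_add hxpos, Real.rpow_one, mul_assoc]
    have e3 : T x ^ (m+1-1) = T x ^ m := by norm_num
    have e4 : T x ^ (m+1) = T x ^ m * T x := by
      rw [Real.rpow_add htpos, Real.rpow_one]
    rw [hD2, e1, e2, e3, e4]
    have hn : n = -3 - m := by linarith
    field_simp
    rw [hn]; ring
  intro J₁ h₁ J₂ h₂
  have main : ∀ x ∈ Set.Ioo a b, ∀ y ∈ Set.Ioo a b, x ≤ y → I x = I y := by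
    intro x hx y hy hxy
    have hsub : Set.Icc x y ⊆ Set.Ioo a b := fun z hz =>
      ⟨lt_of_lt_of_le hx.1 hz.1, lt_of_le_of_lt hz.2 hy.2⟩
    have := constant_of_has_deriv_right_zero
      (f := I) (a := x) (b := y)
      (fun z hz => ((key z (hsub hz)).continuousAt).continuousWithinAt)
      (fun z hz => ((key z (hsub ⟨hz.1, hz.2.le⟩)).hasDerivWithinAt))
    exact (this y ⟨hxy, le_refl y⟩).symm ▸ rfl
  rcases le_total J₁ J₂ with h | h
  · exact main J₁ h₁ J₂ h₂ h
  · exact (main J₂ h₂ J₁ h₁ h).symm
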